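/- The matrix-valued map B : ℝ³ \ {0} → ℝ^{3×3}, B(z)_{ij} = (δ_{ij}|z|² − z_i z_j)/|z|³, is Lipschitz continuous with Lipschitz constant 2 on the set {z ∈ ℝ³ : |z| ≥ 1}; i.e., |B(z) − B(w)| ≤ 2·|z − w| for all z, w with |z|,|w| ≥ 1, where |·| on matrices is the Frobenius norm. -/

import Mathlib

open Real Finset

noncomputable def Bmat (z : EuclideanSpace ℝ (Fin 3)) : Matrix (Fin 3) (Fin 3) ℝ :=
  fun i j => ((if i = j then (1:ℝ) else 0) * ‖z‖ ^ 2 - z i * z j) / ‖z‖ ^ 3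

noncomputable def frobNorm (A : Matrix (Fin 3) (Fin 3) ℝ) : ℝ :=
  Real.sqrt (∑ i, ∑ j, (A i j) ^ 2)

private lemma key_ineq (a b s : ℝ) (ha : 1 ≤ a) (hb : 1 ≤ b) (hsab : s ≤ a * b) :
    2/a^2 + 2/b^2 - 2/(a*b) - 2*s^2/(a^3*b^3) ≤ 4*(a^2 + b^2 - 2*s) := by
  have ha0 : (0:ℝ) < a := lt_of_lt_of_le one_pos ha
  have hb0 : (0:ℝ) < b := lt_of_lt_of_le one_pos hb
  have hab1 : (1:ℝ) ≤ a * b := one_le_mul_of_one_le_of_one_le ha hb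
  have t1 : (0:ℝ) ≤ 2*(a*b)*(a-b)^2*(2*a^2*b^2-1) := by
    have h : (0:ℝ) ≤ 2*a^2*b^2-1 := by nlinarith
    have h' : (0:ℝ) ≤ 2*(a*b)*(a-b)^2 := by positivity
    exact mul_nonneg h' h
  have t2 : (0:ℝ) ≤ 2*(a*b - s)*(4*a^3*b^3 - a*b - s) := by
    have h : (0:ℝ) ≤ a*b - s := by linarith
    have hcube : a*b ≤ a^3*b^3 := by
      nlinarith [mul_nonneg (mul_nonneg (sub_nonneg.2 hab1) (by positivity : (0:ℝ) ≤ a*b+1)) (by positivity : (0:ℝ) ≤ a*b)]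
    have h' : (0:ℝ) ≤ 4*a^3*b^3 - a*b - s := by linarith
    have := mul_nonneg h h'
    linarith
  have key : 2*(a*b)*(a-b)^2*(2*a^2*b^2-1) + 2*(a*b - s)*(4*a^3*b^3 - a*b - s)
      = (4*(a^2+b^2-2*s))*(a^3*b^3) - (2*a*b^3 + 2*a^3*b - 2*a^2*b^2 - 2*s^2) := by ring
  have hG : (2*a*b^3 + 2*a^3*b - 2*a^2*b^2 - 2*s^2) ≤ (4*(a^2+b^2-2*s))*(a^3*b^3) := by
    linarith
  have hLHSeq : 2/a^2 + 2/b^2 - 2/(a*b) - 2*s^2/(a^3*b^3)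
      = (2*a*b^3 + 2*a^3*b - 2*a^2*b^2 - 2*s^2)/(a^3*b^3) := by
    field_simp
  rw [hLHSeq, div_le_iff₀ (by positivity : (0:ℝ) < a^3*b^3)]
  linarith

set_option maxHeartbeats 2000000 in
theorem stmt_3 (z w : EuclideanSpace ℝ (Fin 3)) (hz : 1 ≤ ‖z‖) (hw : 1 ≤ ‖w‖) :
    frobNorm (Bmat z - Bmat w) ≤ 2 * ‖z - w‖ := by
  have ha2 : ‖z‖ ^ 2 = z 0 ^ 2 + z 1 ^ 2 + z 2 ^ 2 := by
    rw [EuclideanSpace.norm_eq, Real.sq_sqrt (by positivity)]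
    simp [Fin.sum_univ_three, Real.norm_eq_abs, sq_abs]
  have hb2 : ‖w‖ ^ 2 = w 0 ^ 2 + w 1 ^ 2 + w 2 ^ 2 := by
    rw [EuclideanSpace.norm_eq, Real.sq_sqrt (by positivity)]
    simp [Fin.sum_univ_three, Real.norm_eq_abs, sq_abs]
  have hd2 : ‖z - w‖ ^ 2 = (z 0 - w 0) ^ 2 + (z 1 - w 1) ^ 2 + (z 2 - w 2) ^ 2 := by
    rw [EuclideanSpace.norm_eq, Real.sq_sqrt (by positivity)]
    simp [Fin.sum_univ_three, Real.norm_eq_abs, sq_abs]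
  have ha0 : (0:ℝ) < ‖z‖ := lt_of_lt_of_le one_pos hz
  have hb0 : (0:ℝ) < ‖w‖ := lt_of_lt_of_le one_pos hw
  have h2d : (0:ℝ) ≤ 2 * ‖z - w‖ := by positivity
  rw [show 2 * ‖z - w‖ = Real.sqrt ((2 * ‖z - w‖) ^ 2) from (Real.sqrt_sq h2d).symm]
  unfold frobNorm
  apply Real.sqrt_le_sqrt
  have hexp : (2 * ‖z - w‖) ^ 2
      = 4 * ((z 0 - w 0) ^ 2 + (z 1 - w 1) ^ 2 + (z 2 - w 2) ^ 2) := by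
    rw [mul_pow, hd2]; ring
  rw [hexp]
  -- Cauchy-Schwarz
  have hsab : z 0 * w 0 + z 1 * w 1 + z 2 * w 2 ≤ ‖z‖ * ‖w‖ := by
    nlinarith [sq_nonneg (z 0 * w 1 - z 1 * w 0), sq_nonneg (z 0 * w 2 - z 2 * w 0),
      sq_nonneg (z 1 * w 2 - z 2 * w 1),
      sq_nonneg (‖z‖ * ‖w‖ - (z 0 * w 0 + z 1 * w 1 + z 2 * w 2)),
      mul_pos ha0 hb0, ha2, hb2]
  have hsum : ∑ i, ∑ j, ((Bmat z - Bmat w) i j) ^ 2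
      = 3*(1/‖z‖ - 1/‖w‖)^2
        - 2*(1/‖z‖ - 1/‖w‖)*((z 0^2 + z 1^2 + z 2^2)/‖z‖^3 - (w 0^2 + w 1^2 + w 2^2)/‖w‖^3)
        + ((z 0^2 + z 1^2 + z 2^2)^2/‖z‖^6 + (w 0^2 + w 1^2 + w 2^2)^2/‖w‖^6
            - 2*(z 0 * w 0 + z 1 * w 1 + z 2 * w 2)^2/(‖z‖^3*‖w‖^3)) := by
    simp only [Bmat, Matrix.sub_apply, Fin.sum_univ_three, Fin.reduceEq, reduceIte,
      if_true, one_mul, zero_mul, zero_sub]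
    field_simp
    ring
  rw [hsum, ← ha2, ← hb2]
  have hclean : 3*(1/‖z‖ - 1/‖w‖)^2
        - 2*(1/‖z‖ - 1/‖w‖)*(‖z‖^2/‖z‖^3 - ‖w‖^2/‖w‖^3)
        + ((‖z‖^2)^2/‖z‖^6 + (‖w‖^2)^2/‖w‖^6
            - 2*(z 0 * w 0 + z 1 * w 1 + z 2 * w 2)^2/(‖z‖^3*‖w‖^3))
      = 2/‖z‖^2 + 2/‖w‖^2 - 2/(‖z‖*‖w‖)
        - 2*(z 0 * w 0 + z 1 * w 1 + z 2 * w 2)^2/(‖z‖^3*‖w‖^3) := by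
    field_simp
    ring
  rw [hclean]
  have hgoal : 4 * ((z 0 - w 0) ^ 2 + (z 1 - w 1) ^ 2 + (z 2 - w 2) ^ 2)
      = 4 * (‖z‖^2 + ‖w‖^2 - 2*(z 0 * w 0 + z 1 * w 1 + z 2 * w 2)) := by
    rw [ha2, hb2]; ring
  rw [hgoal]
  exact key_ineq ‖z‖ ‖w‖ _ hz hw hsab
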